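/- arXiv:1210.6831 — 2 statements merged into one kernel-verified Lean document; each statement's English description precedes it below -/
import Mathlib

section
/- Let G be a simple graph with an independent set I satisfying |I| < |V(G)|. Then every maximal null coloring of G has at least |I| + 1 color classes. -/
open SimpleGraph

/-- The number of steps of the walk `W` from a vertex labeled `i` to a vertex labeled `j`
(with respect to the labeling `f`). -/
def colorSteps {V C : Type} [DecidableEq C] {G : SimpleGraph V} (f : V → C)
    {x y : V} (W : G.Walk x y) (i j : C) : ℕ :=
  W.darts.countP fun d => decide (f d.toProd.1 = i ∧ f d.toProd.2 = j)

/-- A coloring `f` of `G` is a null coloring if for every closed walk `W` and every ordered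
pair `(i, j)` of distinct colors, the number of steps of `W` from a vertex colored `i` to a
vertex colored `j` equals the number of steps from a vertex colored `j` to one colored `i`. -/
def IsNullColoring {V C : Type} [DecidableEq C] (G : SimpleGraph V) (f : V → C) : Prop :=
  ∀ (x : V) (W : G.Walk x x) (i j : C), i ≠ j → colorSteps f W i j = colorSteps f W j i

/-- A null coloring is maximal if no null coloring of `G` has more color classes
(the number of color classes of a coloring `g` is `(Set.range g).ncard`). -/
def IsMaximalNullColoring {V C : Type} [DecidableEq C] (G : SimpleGraph V) (f : V → C) : Prop :=
  IsNullColoring G f ∧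
    ∀ (D : Type) [DecidableEq D] (g : V → D), IsNullColoring G g →
      (Set.range g).ncard ≤ (Set.range f).ncard

/-- The quotient graph `G/f`: vertices are the color classes of `f` (identified with the
range of `f`), two distinct classes being adjacent iff some edge of `G` joins them. -/
def quotientGraph {V C : Type} (G : SimpleGraph V) (f : V → C) :
    SimpleGraph (Set.range f) where
  Adj a b := a ≠ b ∧ ∃ x y : V, G.Adj x y ∧ f x = a.1 ∧ f y = b.1
  symm := ⟨by
    rintro a b ⟨hab, x, y, hxy, hx, hy⟩
    exact ⟨hab.symm, y, x, hxy.symm, hy, hx⟩⟩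
  loopless := ⟨by rintro a ⟨h, -⟩; exact h rfl⟩

/-- The graph obtained from `G` by identifying the vertices `u` and `v` (the merged vertex
is represented by `u`; any loops created are discarded). -/
def identify {V : Type} (G : SimpleGraph V) (u v : V) : SimpleGraph {x : V // x ≠ v} where
  Adj a b := a ≠ b ∧ (G.Adj a.1 b.1 ∨ (a.1 = u ∧ G.Adj v b.1) ∨ (b.1 = u ∧ G.Adj a.1 v))
  symm := ⟨by
    rintro a b ⟨hab, h⟩
    refine ⟨hab.symm, ?_⟩
    rcases h with h | ⟨ha, hb⟩ | ⟨hb, ha⟩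
    · exact Or.inl h.symm
    · exact Or.inr (Or.inr ⟨ha, hb.symm⟩)
    · exact Or.inr (Or.inl ⟨hb, ha.symm⟩)⟩
  loopless := ⟨by rintro a ⟨h, -⟩; exact h rfl⟩

/-- The quotient map `h : G → G'` corresponding to the identification of `u` and `v`. -/
def identifyMap {V : Type} [DecidableEq V] (u v : V) (huv : u ≠ v) : V → {x : V // x ≠ v} :=
  fun x => if hx : x = v then ⟨u, huv⟩ else ⟨x, hx⟩

/-- The net number of steps of `W` from label `a` to label `b`:  steps from `a` to `b`
minus steps from `b` to `a`. -/
def netCount {V C : Type} [DecidableEq C] {G : SimpleGraph V} (f : V → C)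
    {x y : V} (W : G.Walk x y) (a b : C) : ℤ :=
  (colorSteps f W a b : ℤ) - (colorSteps f W b a : ℤ)

private lemma walk_count_aux {V : Type} [DecidableEq V] {G : SimpleGraph V} (a : V) :
    ∀ {x y : V} (W : G.Walk x y),
    W.darts.countP (fun d => decide (d.toProd.1 = a)) + (if y = a then 1 else 0) =
    W.darts.countP (fun d => decide (d.toProd.2 = a)) + (if x = a then 1 else 0) := by
  intro x y W
  induction W with
  | nil => rfl
  | cons h p ih =>
      simp only [SimpleGraph.Walk.darts_cons, List.countP_cons]
      simp only [decide_eq_true_eq]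
      omega

private lemma walk_count_closed {V : Type} [DecidableEq V] {G : SimpleGraph V} (a : V) {x : V}
    (W : G.Walk x x) :
    W.darts.countP (fun d => decide (d.toProd.1 = a)) =
    W.darts.countP (fun d => decide (d.toProd.2 = a)) := by
  have := walk_count_aux a W
  omega

/-- If `G` has an independent set `I` with `|I| < |V(G)|`, then every maximal
null coloring of `G` has at least `|I| + 1` color classes. -/
theorem maximal_null_coloring_card_ge
    {V C : Type} [Fintype V] [DecidableEq C]
    (G : SimpleGraph V) (I : Set V)
    (hind : ∀ x ∈ I, ∀ y ∈ I, ¬ G.Adj x y)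
    (hcard : I.ncard < Fintype.card V)
    (f : V → C) (hf : IsMaximalNullColoring G f) :
    I.ncard + 1 ≤ (Set.range f).ncard := by
  classical
  set g : V → Option {x // x ∈ I} := fun x => if h : x ∈ I then some ⟨x, h⟩ else none with hg
  have hg_some : ∀ (a : {x // x ∈ I}) (v : V), g v = some a ↔ v = a.1 := by
    intro a v
    simp only [hg]
    split
    · rename_i h
      simp [Subtype.ext_iff]
    · rename_i h
      constructor
      · intro hc; exact absurd hc (by simp)
      · intro hc; exact absurd (hc ▸ a.2) h
  have hnull : IsNullColoring G g := by
    intro x W i j hij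
    have hz : ∀ (c d : {x // x ∈ I}), colorSteps g W (some c) (some d) = 0 := by
      intro c d
      apply List.countP_eq_zero.mpr
      intro dd _
      simp only [decide_eq_true_eq, not_and]
      intro h1 h2
      rw [hg_some] at h1 h2
      exact hind _ c.2 _ d.2 (h1 ▸ h2 ▸ dd.adj)
    have main : ∀ a : {x // x ∈ I},
        colorSteps g W (some a) none = colorSteps g W none (some a) := by
      intro a
      have key : ∀ (d : G.Dart),
          decide (g d.toProd.1 = some a ∧ g d.toProd.2 = none) =
          decide (d.toProd.1 = a.1) := by
        intro d
        simp only [decide_eq_decide]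
        constructor
        · rintro ⟨h1, -⟩; exact (hg_some a _).mp h1
        · intro h1
          refine ⟨(hg_some a _).mpr h1, ?_⟩
          simp only [hg]
          split
          · rename_i h2
            exact absurd (h1 ▸ d.adj) (hind _ a.2 _ h2)
          · rfl
      have key2 : ∀ (d : G.Dart),
          decide (g d.toProd.1 = none ∧ g d.toProd.2 = some a) =
          decide (d.toProd.2 = a.1) := by
        intro d
        simp only [decide_eq_decide]
        constructor
        · rintro ⟨-, h1⟩; exact (hg_some a _).mp h1
        · intro h1
          refine ⟨?_, (hg_some a _).mpr h1⟩
          simp only [hg]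
          split
          · rename_i h2
            exact absurd (h1 ▸ d.adj) (hind _ h2 _ a.2)
          · rfl
      unfold colorSteps
      rw [show (fun d : G.Dart => decide (g d.toProd.1 = some a ∧ g d.toProd.2 = none))
            = fun d => decide (d.toProd.1 = a.1) from funext key,
          show (fun d : G.Dart => decide (g d.toProd.1 = none ∧ g d.toProd.2 = some a))
            = fun d => decide (d.toProd.2 = a.1) from funext key2]
      exact walk_count_closed a.1 W
    match i, j with
    | none, none => exact absurd rfl hij
    | some a, some b => rw [hz, hz]
    | some a, none => exact main a
    | none, some a => exact (main a).symm
  have hsurj : Function.Surjective g := by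
    rintro (⟨⟩ | a)
    · by_contra hne
      push_neg at hne
      have hall : ∀ v : V, v ∈ I := by
        intro v
        by_contra hv
        exact hne v (by simp [hg, hv])
      have : I = Set.univ := Set.eq_univ_of_forall hall
      rw [this, Set.ncard_univ, Nat.card_eq_fintype_card] at hcard
      omega
    · exact ⟨a.1, (hg_some a _).mpr rfl⟩
  have hrange : (Set.range g).ncard = I.ncard + 1 := by
    rw [Set.range_eq_univ.mpr hsurj, Set.ncard_univ, Finite.card_option,
        Nat.card_coe_set_eq]
  have := hf.2 (Option {x // x ∈ I}) g hnull
  rw [hrange] at this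
  exact this
end

section
/- Let G be a connected simple graph, f a coloring of G, and w a vertex of G such that no cycle of G passes through w and no other vertex of G has the color f(w). Suppose that the sets of colors used by f on distinct connected components of G - w are pairwise disjoint and that, for each connected component H of G - w, the quotient graph H/(f restricted to H) is acyclic. Then the quotient graph G/f is a tree. -/
open SimpleGraph

private lemma quot_reach_aux {V C : Type} {G : SimpleGraph V} (f : V → C)
    {x y : V} (W : G.Walk x y) :
    (quotientGraph G f).Reachable ⟨f x, ⟨x, rfl⟩⟩ ⟨f y, ⟨y, rfl⟩⟩ := by
  induction W with
  | nil => exact Reachable.refl _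
  | @cons u v z h p ih =>
    by_cases hf : f u = f v
    · have he : (⟨f u, ⟨u, rfl⟩⟩ : Set.range f) = ⟨f v, ⟨v, rfl⟩⟩ := Subtype.ext hf
      rw [he]; exact ih
    · exact (SimpleGraph.Adj.reachable
        (⟨fun hEq => hf (congrArg Subtype.val hEq), u, v, h, rfl, rfl⟩ :
          (quotientGraph G f).Adj ⟨f u, ⟨u, rfl⟩⟩ ⟨f v, ⟨v, rfl⟩⟩)).trans ih

private lemma quot_walk_transfer {V C : Type} (G : SimpleGraph V) (f : V → C) (w : V)
    (hdisj : ∀ c₁ c₂ : (G.induce {x : V | x ≠ w}).ConnectedComponent, c₁ ≠ c₂ →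
        ∀ x ∈ c₁.supp, ∀ y ∈ c₂.supp, f x.1 ≠ f y.1)
    (c : (G.induce {x : V | x ≠ w}).ConnectedComponent) :
    ∀ {A B : Set.range f} (W : (quotientGraph G f).Walk A B),
      (∀ a ∈ W.support, a.1 ≠ f w) →
      ∀ hA : A.1 ∈ Set.range (fun y : c.supp => f y.1.1),
      ∃ (hB : B.1 ∈ Set.range (fun y : c.supp => f y.1.1))
        (W' : (quotientGraph ((G.induce {x : V | x ≠ w}).induce c.supp)
          (fun y => f y.1.1)).Walk ⟨A.1, hA⟩ ⟨B.1, hB⟩),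
        W'.support.map Subtype.val = W.support.map Subtype.val ∧
        W'.edges.map (Sym2.map Subtype.val) = W.edges.map (Sym2.map Subtype.val) := by
  intro A B W
  induction W with
  | nil => intro _ hA; exact ⟨hA, SimpleGraph.Walk.nil, by simp, by simp⟩
  | @cons A A₂ B h p ih =>
    intro hsup hA
    obtain ⟨hne, x, y, hxy, hfx, hfy⟩ := id h
    have hA1 : A.1 ≠ f w := hsup A (SimpleGraph.Walk.start_mem_support _)
    have hA₂1 : A₂.1 ≠ f w := hsup A₂ (by
      rw [SimpleGraph.Walk.support_cons]
      exact List.mem_cons_of_mem _ p.start_mem_support)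
    have hx : x ≠ w := fun hh => hA1 (by rw [← hfx, hh])
    have hy : y ≠ w := fun hh => hA₂1 (by rw [← hfy, hh])
    obtain ⟨v₀, hv₀⟩ := id hA
    have hxc : (⟨x, hx⟩ : {t : V | t ≠ w}) ∈ c.supp := by
      by_contra hxc
      have hnec : (G.induce {t : V | t ≠ w}).connectedComponentMk ⟨x, hx⟩ ≠ c := by
        intro hh; exact hxc ((ConnectedComponent.mem_supp_iff _ _).mpr hh)
      exact hdisj _ c hnec ⟨x, hx⟩ ((ConnectedComponent.mem_supp_iff _ _).mpr rfl)
        v₀.1 v₀.2 (hfx.trans hv₀.symm)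
    have hadj : (G.induce {t : V | t ≠ w}).Adj ⟨x, hx⟩ ⟨y, hy⟩ := hxy
    have hyc : (⟨y, hy⟩ : {t : V | t ≠ w}) ∈ c.supp := by
      rw [ConnectedComponent.mem_supp_iff] at hxc ⊢
      rw [← hxc]
      exact ConnectedComponent.sound hadj.symm.reachable
    have hB' : A₂.1 ∈ Set.range (fun y : c.supp => f y.1.1) := ⟨⟨⟨y, hy⟩, hyc⟩, hfy⟩
    have qadj : (quotientGraph ((G.induce {t : V | t ≠ w}).induce c.supp)
        (fun y => f y.1.1)).Adj ⟨A.1, hA⟩ ⟨A₂.1, hB'⟩ :=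
      ⟨fun hEq => hne (Subtype.ext (Subtype.mk_eq_mk.mp hEq)),
       ⟨⟨x, hx⟩, hxc⟩, ⟨⟨y, hy⟩, hyc⟩, hxy, hfx, hfy⟩
    obtain ⟨hB, W', hs, he⟩ := ih (fun a ha => hsup a (by
      rw [SimpleGraph.Walk.support_cons]; exact List.mem_cons_of_mem _ ha)) hB'
    exact ⟨hB, SimpleGraph.Walk.cons qadj W',
      by rw [SimpleGraph.Walk.support_cons, SimpleGraph.Walk.support_cons, List.map_cons, List.map_cons, hs],
      by rw [SimpleGraph.Walk.edges_cons, SimpleGraph.Walk.edges_cons, List.map_cons, List.map_cons, he]; simp⟩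

/-- Let `G` be connected, `f` a coloring, and `w` a vertex lying on no cycle
of `G` whose color is used by no other vertex.  If the sets of colors used by `f` on
distinct connected components of `G - w` are pairwise disjoint, and for each component the
quotient graph of the restriction of `f` is acyclic, then the quotient graph `G/f` is a
tree. -/
theorem quotient_is_tree_of_components
    {V C : Type} [Fintype V] [DecidableEq V] [DecidableEq C]
    (G : SimpleGraph V) (hG : G.Connected) (f : V → C) (w : V)
    (hcyc : ∀ (x : V) (W : G.Walk x x), W.IsCycle → w ∉ W.support)
    (huniq : ∀ x : V, x ≠ w → f x ≠ f w)
    (hdisj : ∀ c₁ c₂ : (G.induce {x : V | x ≠ w}).ConnectedComponent, c₁ ≠ c₂ →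
        ∀ x ∈ c₁.supp, ∀ y ∈ c₂.supp, f x.1 ≠ f y.1)
    (hacyc : ∀ c : (G.induce {x : V | x ≠ w}).ConnectedComponent,
        (quotientGraph ((G.induce {x : V | x ≠ w}).induce c.supp)
          (fun y => f y.1.1)).IsAcyclic) :
    (quotientGraph G f).IsTree := by
  constructor
  · -- connected
    haveI : Nonempty (Set.range f) := ⟨⟨f w, ⟨w, rfl⟩⟩⟩
    refine ⟨fun a b => ?_⟩
    obtain ⟨xa, hxa⟩ := id a.2
    obtain ⟨xb, hxb⟩ := id b.2
    obtain ⟨W⟩ := hG.preconnected xa xb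
    have hr := quot_reach_aux f W
    have ha : (⟨f xa, ⟨xa, rfl⟩⟩ : Set.range f) = a := Subtype.ext hxa
    have hb : (⟨f xb, ⟨xb, rfl⟩⟩ : Set.range f) = b := Subtype.ext hxb
    rwa [ha, hb] at hr
  · -- acyclic
    intro X W hW
    set Fw : Set.range f := ⟨f w, ⟨w, rfl⟩⟩ with hFwdef
    by_cases hFw : Fw ∈ W.support
    · -- case B : the cycle passes through the class of w
      have hW₁ : (W.rotate Fw hFw).IsCycle := hW.rotate hFw
      obtain ⟨A₂, h1, p, hW₁eq⟩ := SimpleGraph.Walk.not_nil_iff.mp hW₁.not_nil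
      rw [hW₁eq] at hW₁
      have hA₂ne : A₂ ≠ Fw := h1.ne'
      obtain ⟨B₂, h2, q, hrev⟩ := SimpleGraph.Walk.not_nil_iff.mp
        (SimpleGraph.Walk.not_nil_of_ne (p := p.reverse) h1.ne)
      have hB₂ne : B₂ ≠ Fw := h2.ne'
      have hp : p = q.reverse.concat h2.symm := by
        rw [← p.reverse_reverse, hrev, SimpleGraph.Walk.reverse_cons]
        rfl
      have hsupnd : p.support.Nodup := by
        have h3 := hW₁.support_nodup
        simpa using h3
      have h3 : p.support = q.reverse.support ++ [Fw] := by
        rw [hp, SimpleGraph.Walk.support_concat]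
      rw [h3] at hsupnd
      obtain ⟨hnd1, -, hdisj'⟩ := List.nodup_append.mp hsupnd
      have hFwq : Fw ∉ q.reverse.support := fun hm => hdisj' Fw hm Fw (by simp) rfl
      have hA₂B₂ : A₂ ≠ B₂ := by
        intro hEq
        have hnd := hW₁.edges_nodup
        rw [SimpleGraph.Walk.edges_cons, hp, SimpleGraph.Walk.edges_concat] at hnd
        have hEq2 : s(Fw, A₂) = s(B₂, Fw) := by rw [hEq, Sym2.eq_swap]
        have hmem : s(Fw, A₂) ∈ q.reverse.edges.concat s(B₂, Fw) := by
          rw [hEq2, List.concat_eq_append]; simp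
        exact (List.nodup_cons.mp hnd).1 hmem
      obtain ⟨-, x₁, y₁, hxy₁, hfx₁, hfy₁⟩ := h1
      obtain ⟨-, x₂, y₂, hxy₂, hfx₂, hfy₂⟩ := h2
      have hx₁ : x₁ = w := by
        by_contra hx₁; exact huniq x₁ hx₁ hfx₁
      have hx₂ : x₂ = w := by
        by_contra hx₂; exact huniq x₂ hx₂ hfx₂
      have hadjwy₁ : G.Adj w y₁ := hx₁ ▸ hxy₁
      have hadjwy₂ : G.Adj w y₂ := hx₂ ▸ hxy₂
      have hy₁w : y₁ ≠ w := fun hh => hA₂ne (Subtype.ext (by rw [← hfy₁, hh]))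
      have hy₂w : y₂ ≠ w := fun hh => hB₂ne (Subtype.ext (by rw [← hfy₂, hh]))
      have hy₁y₂ : y₁ ≠ y₂ := fun hh =>
        hA₂B₂ (Subtype.ext (by rw [← hfy₁, ← hfy₂, hh]))
      set c := (G.induce {x : V | x ≠ w}).connectedComponentMk ⟨y₁, hy₁w⟩ with hc
      have hA : A₂.1 ∈ Set.range (fun y : c.supp => f y.1.1) :=
        ⟨⟨⟨y₁, hy₁w⟩, (ConnectedComponent.mem_supp_iff _ _).mpr rfl⟩, hfy₁⟩
      have hsupq : ∀ a ∈ q.reverse.support, a.1 ≠ f w := by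
        intro a ha hh
        exact hFwq ((Subtype.ext hh : a = Fw) ▸ ha)
      obtain ⟨hB, -, -, -⟩ := quot_walk_transfer G f w hdisj c q.reverse hsupq hA
      obtain ⟨v, hv⟩ := hB
      have hy₂c : (⟨y₂, hy₂w⟩ : {x : V | x ≠ w}) ∈ c.supp := by
        by_contra hcc
        have hnec : (G.induce {x : V | x ≠ w}).connectedComponentMk ⟨y₂, hy₂w⟩ ≠ c :=
          fun hh => hcc ((ConnectedComponent.mem_supp_iff _ _).mpr hh)
        exact hdisj _ c hnec ⟨y₂, hy₂w⟩ ((ConnectedComponent.mem_supp_iff _ _).mpr rfl)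
          v.1 v.2 (hfy₂.trans hv.symm)
      have hreach : (G.induce {x : V | x ≠ w}).Reachable ⟨y₁, hy₁w⟩ ⟨y₂, hy₂w⟩ := by
        apply ConnectedComponent.exact
        rw [(ConnectedComponent.mem_supp_iff _ _).mp hy₂c]
      obtain ⟨P₀⟩ := hreach
      let P₁ := P₀.toPath
      let P₂ : G.Walk y₁ y₂ :=
        P₁.1.map (SimpleGraph.Embedding.induce {x : V | x ≠ w}).toHom
      have hP₂ : P₂.IsPath :=
        SimpleGraph.Walk.map_isPath_of_injective Subtype.val_injective P₁.2
      have hwP₂ : w ∉ P₂.support := by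
        show w ∉ (P₁.1.map (SimpleGraph.Embedding.induce {x : V | x ≠ w}).toHom).support
        rw [SimpleGraph.Walk.support_map]
        intro hm
        obtain ⟨a, -, ha2⟩ := List.mem_map.mp hm
        exact a.2 ha2
      have hPw : (SimpleGraph.Walk.cons hadjwy₁ P₂).IsPath := hP₂.cons hwP₂
      have hCyc : (SimpleGraph.Walk.cons hadjwy₂.symm
          (SimpleGraph.Walk.cons hadjwy₁ P₂)).IsCycle := by
        rw [SimpleGraph.Walk.cons_isCycle_iff]
        refine ⟨hPw, ?_⟩
        rw [SimpleGraph.Walk.edges_cons]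
        simp only [List.mem_cons]
        rintro (hEq | hmem)
        · rw [Sym2.eq_iff] at hEq
          rcases hEq with ⟨h1', -⟩ | ⟨h1', -⟩
          · exact hy₂w h1'
          · exact hy₁y₂ h1'.symm
        · exact hwP₂ (P₂.snd_mem_support_of_mem_edges hmem)
      exact hcyc y₂ _ hCyc (by simp [SimpleGraph.Walk.support_cons])
    · -- case A : the cycle avoids the class of w
      have hsup : ∀ a ∈ W.support, a.1 ≠ f w := by
        intro a ha h
        exact hFw ((Subtype.ext h : a = Fw) ▸ ha)
      have hX1 : X.1 ≠ f w := hsup X W.start_mem_support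
      obtain ⟨x₀, hx₀⟩ := id X.2
      have hx₀w : x₀ ≠ w := fun h => hX1 (by rw [← hx₀, h])
      set c := (G.induce {x : V | x ≠ w}).connectedComponentMk ⟨x₀, hx₀w⟩ with hc
      have hA : X.1 ∈ Set.range (fun y : c.supp => f y.1.1) :=
        ⟨⟨⟨x₀, hx₀w⟩, (ConnectedComponent.mem_supp_iff _ _).mpr rfl⟩, hx₀⟩
      obtain ⟨hB, W', hs, he⟩ := quot_walk_transfer G f w hdisj c W hsup hA
      refine hacyc c W' ?_
      have hval : Function.Injective
          (Subtype.val : Set.range (fun y : c.supp => f y.1.1) → C) :=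
        Subtype.val_injective
      refine ⟨⟨⟨?_⟩, ?_⟩, ?_⟩
      · -- edges nodup
        have h1 : (W.edges.map (Sym2.map Subtype.val)).Nodup :=
          hW.edges_nodup.map (Sym2.map.injective Subtype.val_injective)
        rw [← he] at h1
        exact h1.of_map _
      · -- not nil
        intro hnil
        have hlen : W'.support.length = W.support.length := by
          rw [← List.length_map (as := W'.support) Subtype.val, hs, List.length_map]
        rw [hnil] at hlen
        simp only [SimpleGraph.Walk.support_nil, List.length_singleton] at hlen
        have : W.length = 0 := by
          have h2 := W.length_support
          omega
        exact hW.ne_nil ((SimpleGraph.Walk.nil_iff_length_eq.mpr this).eq_nil)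
      · -- support tail nodup
        have h1 : (W.support.tail.map Subtype.val).Nodup := hW.support_nodup.map Subtype.val_injective
        have h2 : W'.support.tail.map Subtype.val = W.support.tail.map Subtype.val := by
          rw [List.map_tail, List.map_tail, hs]
        rw [← h2] at h1
        exact h1.of_map _
end
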